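/- Let X be a T1 topological space. For each a ∈ X, the characteristic function δ_a : X → ℝ of the singleton {a} (δ_a(x) = 1 if x = a and 0 otherwise) is scatteredly continuous, and the set D = { δ_a : a ∈ X } is a discrete subspace of SC_p(X) of cardinality |X|. -/

import Mathlib

open Set Filter Topology Cardinal

/-- A function is scatteredly continuous if every nonempty subset `A` of the domain
contains a point at which the restriction `f|A` is continuous. -/
def ScatCont {X Y : Type*} [TopologicalSpace X] [TopologicalSpace Y] (f : X → Y) : Prop :=
  ∀ A : Set X, A.Nonempty → ∃ a ∈ A, ContinuousWithinAt f A a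

/-- A family of functions is scatteredly continuous if every nonempty subset `A` of the domain
contains a point at which all restrictions `f|A`, `f ∈ F`, are continuous. -/
def ScatContFam {X Y : Type*} [TopologicalSpace X] [TopologicalSpace Y]
    (F : Set (X → Y)) : Prop :=
  ∀ A : Set X, A.Nonempty → ∃ a ∈ A, ∀ f ∈ F, ContinuousWithinAt f A a

/-- A function is weakly discontinuous if every subset `A` of the domain contains an
open (in `A`) dense (in `A`) subset `U` such that `f|U` is continuous. -/
def WeaklyDisc {X Y : Type*} [TopologicalSpace X] [TopologicalSpace Y] (f : X → Y) : Prop :=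
  ∀ A : Set X, ∃ U : Set X, U ⊆ A ∧ (∃ V : Set X, IsOpen V ∧ U = V ∩ A) ∧
    A ⊆ closure U ∧ ContinuousOn f U

/-- A family of functions is weakly discontinuous if every subset `A` of the domain contains an
open (in `A`) dense (in `A`) subset `U` such that every `f|U`, `f ∈ F`, is continuous. -/
def WeaklyDiscFam {X Y : Type*} [TopologicalSpace X] [TopologicalSpace Y]
    (F : Set (X → Y)) : Prop :=
  ∀ A : Set X, ∃ U : Set X, U ⊆ A ∧ (∃ V : Set X, IsOpen V ∧ U = V ∩ A) ∧
    A ⊆ closure U ∧ ∀ f ∈ F, ContinuousOn f U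

/-- The decomposition number of a family `F` of functions: the smallest cardinality of a
cover `𝒞` of `X` such that every `f ∈ F` restricted to every `C ∈ 𝒞` is continuous. -/
noncomputable def Dec {X Y : Type*} [TopologicalSpace X] [TopologicalSpace Y]
    (F : Set (X → Y)) : Cardinal :=
  sInf { c : Cardinal | ∃ 𝒞 : Set (Set X), c = #𝒞 ∧ ⋃₀ 𝒞 = Set.univ ∧
    ∀ C ∈ 𝒞, ∀ f ∈ F, ContinuousOn f C }

/-- The Lindelöf number: the smallest infinite cardinal `κ` such that every open cover
has a subcover of cardinality `≤ κ`. -/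
noncomputable def lindelofNum (X : Type*) [TopologicalSpace X] : Cardinal :=
  sInf { κ : Cardinal | Cardinal.aleph0 ≤ κ ∧ ∀ 𝒰 : Set (Set X), (∀ U ∈ 𝒰, IsOpen U) →
    ⋃₀ 𝒰 = Set.univ → ∃ 𝒱 ⊆ 𝒰, #𝒱 ≤ κ ∧ ⋃₀ 𝒱 = Set.univ }

/-- The hereditary Lindelöf number: the supremum of the Lindelöf numbers of all subspaces. -/
noncomputable def heredLindelofNum (X : Type*) [TopologicalSpace X] : Cardinal :=
  ⨆ Z : Set X, lindelofNum Z

/-- A network for a topological space: a family of (arbitrary) sets such that every open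
neighbourhood of every point contains a member of the family containing that point. -/
def IsNetwork {X : Type*} [TopologicalSpace X] (N : Set (Set X)) : Prop :=
  ∀ (x : X) (U : Set X), IsOpen U → x ∈ U → ∃ n ∈ N, x ∈ n ∧ n ⊆ U

/-- The network weight: the smallest infinite cardinality of a network. -/
noncomputable def netWt (X : Type*) [TopologicalSpace X] : Cardinal :=
  sInf { c : Cardinal | ∃ N : Set (Set X), IsNetwork N ∧ c = max #N Cardinal.aleph0 }

/-- The weight: the smallest infinite cardinality of a base of the topology. -/
noncomputable def wt (X : Type*) [TopologicalSpace X] : Cardinal :=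
  sInf { c : Cardinal | ∃ B : Set (Set X), TopologicalSpace.IsTopologicalBasis B ∧
    c = max #B Cardinal.aleph0 }

/-- The density: the smallest cardinality of a dense subset. -/
noncomputable def dens (X : Type*) [TopologicalSpace X] : Cardinal :=
  sInf { c : Cardinal | ∃ D : Set X, Dense D ∧ c = #D }

/-- The hereditary density: the supremum of densities of all subspaces. -/
noncomputable def heredDens (X : Type*) [TopologicalSpace X] : Cardinal :=
  ⨆ Z : Set X, dens Z

/-- The spread: the supremum of cardinalities of discrete subspaces. -/
noncomputable def spread (X : Type*) [TopologicalSpace X] : Cardinal :=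
  sSup { c : Cardinal | ∃ D : Set X, DiscreteTopology D ∧ c = #D }

/-- A subset `C` of a topological vector space over `ℝ` is σ-convex if for every sequence
`(x n)` in `C` and every sequence `(t n)` of positive reals with `∑ n, t n = 1`, the series
`∑ n, t n • x n` converges to a point of `C`. -/
def SigmaConvex {L : Type*} [AddCommGroup L] [Module ℝ L] [TopologicalSpace L]
    (C : Set L) : Prop :=
  ∀ (x : ℕ → L) (t : ℕ → ℝ), (∀ n, x n ∈ C) → (∀ n, 0 < t n) →
    Tendsto (fun N => ∑ n ∈ Finset.range N, t n) atTop (𝓝 1) →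
    ∃ c ∈ C, Tendsto (fun N => ∑ n ∈ Finset.range N, t n • x n) atTop (𝓝 c)

/-- A topological space has countable tightness if every point in the closure of a set `A`
lies in the closure of a countable subset of `A`. -/
def CountablyTight (X : Type*) [TopologicalSpace X] : Prop :=
  ∀ (A : Set X) (a : X), a ∈ closure A → ∃ B ⊆ A, B.Countable ∧ a ∈ closure B

/-- The characteristic function of a singleton `{a}` of a `T₁`-space. -/
def deltaFn {X : Type*} [DecidableEq X] (a : X) : X → ℝ := fun x => if x = a then 1 else 0

/-- For a `T₁`-space `X`, each characteristic function `δ_a` of a singleton is scatteredly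
continuous, and the set `D = {δ_a : a ∈ X}` is a discrete subspace of `SC_p(X)` of
cardinality `|X|`. -/
theorem stmt13 {X : Type*} [TopologicalSpace X] [T1Space X] [DecidableEq X] :
    (∀ a : X, ScatCont (deltaFn a)) ∧
    DiscreteTopology (Set.range (deltaFn (X := X))) ∧
    #(Set.range (deltaFn (X := X))) = #X := by
  have hinj : Function.Injective (deltaFn (X := X)) := by
    intro a b hab
    by_contra h
    have := congrFun hab a
    simp [deltaFn, h] at this
  refine ⟨?_, ?_, Cardinal.mk_range_eq _ hinj⟩
  · intro a A hA
    by_cases ha : A ⊆ {a}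
    · refine ⟨a, ?_, ?_⟩
      · obtain ⟨x, hx⟩ := hA
        have hxa : x = a := ha hx
        rwa [hxa] at hx
      · have : A = {a} := Set.Subset.antisymm ha (by
          obtain ⟨x, hx⟩ := hA; have := ha hx; simp_all)
        rw [this]
        exact continuousWithinAt_singleton
    · obtain ⟨b, hb, hba⟩ : ∃ b ∈ A, b ≠ a := by
        by_contra h; push_neg at h; exact ha fun x hx => h x hx
      refine ⟨b, hb, ?_⟩
      have hev : ∀ᶠ x in 𝓝[A] b, deltaFn a x = (0 : ℝ) := by
        filter_upwards [nhdsWithin_le_nhds (isOpen_compl_singleton.mem_nhds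
          (by simpa using hba))] with x hx
        simp only [Set.mem_compl_iff, Set.mem_singleton_iff] at hx
        simp [deltaFn, hx]
      have h0 : deltaFn a b = (0 : ℝ) := by simp [deltaFn, hba]
      unfold ContinuousWithinAt
      rw [h0]
      exact Filter.Tendsto.congr' (hev.mono fun x hx => hx.symm) tendsto_const_nhds
  · rw [discreteTopology_iff_isOpen_singleton]
    rintro ⟨f, a, rfl⟩
    have hU : IsOpen {g : X → ℝ | g a ∈ Set.Ioi (1/2 : ℝ)} :=
      (isOpen_Ioi).preimage (continuous_apply a)
    have : ({⟨deltaFn a, a, rfl⟩} : Set (Set.range (deltaFn (X := X)))) =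
        Subtype.val ⁻¹' {g : X → ℝ | g a ∈ Set.Ioi (1/2 : ℝ)} := by
      ext ⟨g, b, rfl⟩
      simp only [Set.mem_singleton_iff, Set.mem_preimage, Set.mem_setOf_eq,
        Set.mem_Ioi, Subtype.mk.injEq]
      constructor
      · intro h
        have hba : b = a := hinj (congrArg Subtype.val h)
        subst hba; simp [deltaFn]; norm_num
      · intro h
        by_cases hba : b = a
        · subst hba; rfl
        · exfalso; simp [deltaFn, Ne.symm hba] at h; linarith
    rw [this]
    exact hU.preimage continuous_subtype_val
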